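/- For n ≥ r ≥ 1, the number of permutations of a set of n+r elements such that none of the first r elements is a fixed point and the first r elements lie in pairwise distinct cycles equals (n!/r!)·n·(n-1)···(n-r+1). -/
import Mathlib

open Equiv Equiv.Perm

namespace CardDist

def Cond (m n : ℕ) (σ : Perm (Fin m)) : Prop :=
  (∀ i : Fin m, n ≤ (i : ℕ) → σ i ≠ i) ∧
  ∀ i j : Fin m, n ≤ (i : ℕ) → n ≤ (j : ℕ) → i ≠ j → ¬ σ.SameCycle i j

noncomputable def cnt (m n : ℕ) : ℕ := Nat.card {σ : Perm (Fin m) // Cond m n σ}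

lemma eq_of_fixed_sameCycle {m : ℕ} {σ : Perm (Fin m)} {x y : Fin m} (h : σ x = x)
    (hs : σ.SameCycle x y) : x = y := by
  obtain ⟨z, hz⟩ := hs
  rwa [zpow_apply_eq_self_of_apply_eq_self h] at hz

lemma sameCycle_pow_nat {m : ℕ} (σ : Perm (Fin m)) (x : Fin m) (K : ℕ) :
    σ.SameCycle x ((σ ^ K) x) := ⟨K, by rw [zpow_natCast]⟩

lemma card_split {α : Type*} [Finite α] (P Q : α → Prop) :
    Nat.card {a // P a} = Nat.card {a // P a ∧ Q a} + Nat.card {a // P a ∧ ¬Q a} := by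
  classical
  rw [← Nat.card_sum]
  exact (Nat.card_congr (((Equiv.subtypeSubtypeEquivSubtypeInter P Q).symm.sumCongr
    (Equiv.subtypeSubtypeEquivSubtypeInter P (fun a => ¬ Q a)).symm).trans
    (Equiv.sumCompl _))).symm

lemma card_sigma' {ι : Type*} [Fintype ι] (f : ι → Type*) [∀ i, Finite (f i)] :
    Nat.card (Σ i, f i) = ∑ i, Nat.card (f i) := by
  classical
  letI : ∀ i, Fintype (f i) := fun i => Fintype.ofFinite _
  rw [Nat.card_eq_fintype_card, Fintype.card_sigma]
  exact Finset.sum_congr rfl fun i _ => (Nat.card_eq_fintype_card).symm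

lemma sum_range_ite (M a c : ℕ) :
    (∑ j ∈ Finset.range M, if a ≤ j then c else 0) = (M - a) * c := by
  induction M with
  | zero => simp
  | succ M ih =>
    rw [Finset.sum_range_succ, ih]
    by_cases h : a ≤ M
    · rw [if_pos h]
      have : M + 1 - a = (M - a) + 1 := by omega
      rw [this, add_mul, one_mul]
    · rw [if_neg h]
      have h1 : M - a = 0 := by omega
      have h2 : M + 1 - a = 0 := by omega
      rw [h1, h2]; simp

def prodFstFixed {A B : Type*} (a : A) : {x : A × B // x.1 = a} ≃ B where
  toFun x := x.val.2
  invFun b := ⟨(a, b), rfl⟩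
  left_inv := by rintro ⟨⟨a', b⟩, rfl⟩; rfl
  right_inv b := rfl

def delAt1 {k : ℕ} (d : Fin (k + 1)) :
    {σ : Perm (Fin (k + 1)) // σ d = d} ≃ {π : Perm (Option (Fin k)) // π none = none} :=
  (Equiv.permCongr (finSuccEquiv' d)).subtypeEquiv (fun σ => by
    rw [Equiv.permCongr_apply, finSuccEquiv'_symm_none, ← finSuccEquiv'_at d,
      Equiv.apply_eq_iff_eq])

def delAt2 (k : ℕ) : {π : Perm (Option (Fin k)) // π none = none} ≃ Perm (Fin k) :=
  (Equiv.Perm.decomposeOption.subtypeEquiv (fun π => by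
    simp [Equiv.Perm.decomposeOption])).trans (prodFstFixed none)

def delAt {k : ℕ} (d : Fin (k + 1)) : {σ : Perm (Fin (k + 1)) // σ d = d} ≃ Perm (Fin k) :=
  (delAt1 d).trans (delAt2 k)

lemma delAt_spec {k : ℕ} (d : Fin (k + 1)) (x : {σ : Perm (Fin (k + 1)) // σ d = d})
    (i : Fin k) : x.val (d.succAbove i) = d.succAbove (delAt d x i) := by
  have hne : x.val (d.succAbove i) ≠ d := by
    intro h
    exact Fin.succAbove_ne d i (x.val.injective (h.trans x.prop.symm))
  obtain ⟨z, hz⟩ := Fin.exists_succAbove_eq hne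
  have hdel : delAt d x = Equiv.removeNone (Equiv.permCongr (finSuccEquiv' d) x.val) := rfl
  set π := Equiv.permCongr (finSuccEquiv' d) x.val with hπdef
  have hπ : π (some i) = some z := by
    rw [hπdef, Equiv.permCongr_apply, finSuccEquiv'_symm_some, ← hz, finSuccEquiv'_succAbove]
  have h2 : some (Equiv.removeNone π i) = π (some i) := Equiv.removeNone_some π ⟨z, hπ⟩
  rw [hπ] at h2
  rw [hdel, Option.some_injective _ h2, hz]

lemma delAt_pow {k : ℕ} (d : Fin (k + 1)) (x : {σ : Perm (Fin (k + 1)) // σ d = d})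
    (K : ℕ) (i : Fin k) :
    (x.val ^ K) (d.succAbove i) = d.succAbove (((delAt d x) ^ K) i) := by
  induction K with
  | zero => simp
  | succ K ih =>
    rw [pow_succ', Equiv.Perm.mul_apply, pow_succ', Equiv.Perm.mul_apply, ih, delAt_spec]

lemma delAt_fixed_iff {k : ℕ} (d : Fin (k + 1)) (x : {σ : Perm (Fin (k + 1)) // σ d = d})
    (i : Fin k) : delAt d x i = i ↔ x.val (d.succAbove i) = d.succAbove i := by
  rw [delAt_spec]
  exact ⟨fun h => by rw [h], fun h => Fin.succAbove_right_injective h⟩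

lemma delAt_sameCycle {k : ℕ} (d : Fin (k + 1)) (x : {σ : Perm (Fin (k + 1)) // σ d = d})
    (i j : Fin k) :
    x.val.SameCycle (d.succAbove i) (d.succAbove j) ↔ (delAt d x).SameCycle i j := by
  constructor
  · intro h
    obtain ⟨K, -, hK⟩ := h.exists_pow_eq'
    rw [delAt_pow] at hK
    exact ⟨K, by rw [zpow_natCast]; exact Fin.succAbove_right_injective hK⟩
  · intro h
    obtain ⟨K, -, hK⟩ := h.exists_pow_eq'
    exact ⟨K, by rw [zpow_natCast, delAt_pow, hK]⟩

lemma succAbove_threshold {k n : ℕ} (d : Fin (k + 1)) (hd : n ≤ (d : ℕ)) (i : Fin k) :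
    n ≤ ((d.succAbove i : Fin (k + 1)) : ℕ) ↔ n ≤ (i : ℕ) := by
  rcases lt_or_ge (Fin.castSucc i) d with h | h
  · rw [Fin.succAbove_of_castSucc_lt _ _ h]
    simp
  · rw [Fin.succAbove_of_le_castSucc _ _ h]
    have : (d : ℕ) ≤ (i : ℕ) := h
    simp only [Fin.val_succ]
    omega

def Cond2 (k n : ℕ) (p : Fin (k + 2)) (τ : Perm (Fin (k + 1))) : Prop :=
  (∀ i : Fin (k + 1), n ≤ (i : ℕ) → (τ i ≠ i ∨ i.succ = p)) ∧
  ∀ i j : Fin (k + 1), n ≤ (i : ℕ) → n ≤ (j : ℕ) → i ≠ j → ¬ τ.SameCycle i j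

section decomp
variable {k n : ℕ} (p : Fin (k + 2)) (τ : Perm (Fin (k + 1)))

lemma dF_fixed_iff (x : Fin (k + 1)) :
    Equiv.Perm.decomposeFin.symm (p, τ) x.succ = x.succ ↔ (τ x = x ∧ p ≠ x.succ) := by
  rw [Equiv.Perm.decomposeFin_symm_apply_succ]
  by_cases h : (τ x).succ = p
  · rw [h, Equiv.swap_apply_right]
    constructor
    · intro h0; exact absurd h0.symm (Fin.succ_ne_zero x)
    · rintro ⟨h1, h2⟩
      exact (h2 (h.symm.trans (congrArg Fin.succ h1))).elim
  · rw [Equiv.swap_apply_of_ne_of_ne (Fin.succ_ne_zero _) h]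
    constructor
    · intro h1
      have := Fin.succ_injective _ h1
      exact ⟨this, by rw [← h1]; exact fun hh => h hh.symm⟩
    · rintro ⟨h1, -⟩; rw [h1]

lemma dF_sameCycle_iff (x y : Fin (k + 1)) :
    (Equiv.Perm.decomposeFin.symm (p, τ)).SameCycle x.succ y.succ ↔ τ.SameCycle x y := by
  set σ := Equiv.Perm.decomposeFin.symm (p, τ) with hσ
  have happ : ∀ z : Fin (k + 1), σ z.succ = Equiv.swap 0 p (τ z).succ := fun z =>
    Equiv.Perm.decomposeFin_symm_apply_succ τ p z
  have hzero : σ 0 = p := Equiv.Perm.decomposeFin_symm_apply_zero p τ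
  constructor
  · intro h
    obtain ⟨K, -, hK⟩ := h.exists_pow_eq'
    clear h
    induction K using Nat.strong_induction_on generalizing x with
    | _ K ih =>
      match K, hK with
      | 0, hK =>
        exact (Fin.succ_injective _ hK) ▸ Equiv.Perm.SameCycle.refl τ x
      | (K+1), hK =>
        rw [pow_succ, Equiv.Perm.mul_apply, happ] at hK
        by_cases hp : (τ x).succ = p
        · rw [hp, Equiv.swap_apply_right] at hK
          match K, hK with
          | 0, hK =>
            rw [pow_zero, Equiv.Perm.one_apply] at hK
            exact absurd hK.symm (Fin.succ_ne_zero y)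
          | (K'+1), hK =>
            rw [pow_succ, Equiv.Perm.mul_apply, hzero, ← hp] at hK
            exact (Equiv.Perm.sameCycle_apply_right.mpr (Equiv.Perm.SameCycle.refl τ x)).trans
              (ih K' (by omega) (τ x) hK)
        · rw [Equiv.swap_apply_of_ne_of_ne (Fin.succ_ne_zero _) hp] at hK
          exact (Equiv.Perm.sameCycle_apply_right.mpr (Equiv.Perm.SameCycle.refl τ x)).trans
            (ih K (by omega) (τ x) hK)
  · intro h
    obtain ⟨K, -, hK⟩ := h.exists_pow_eq'
    clear h
    induction K generalizing y with
    | zero =>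
      simp only [pow_zero, Equiv.Perm.one_apply] at hK
      exact hK ▸ Equiv.Perm.SameCycle.refl σ x.succ
    | succ K ih =>
      rw [pow_succ', Equiv.Perm.mul_apply] at hK
      set z := (τ ^ K) x with hz
      have h1 : σ.SameCycle x.succ z.succ := ih z hz.symm
      have h2 : σ.SameCycle z.succ (τ z).succ := by
        by_cases hp : (τ z).succ = p
        · refine ⟨2, ?_⟩
          have : σ z.succ = 0 := by rw [happ, hp, Equiv.swap_apply_right]
          rw [show (2 : ℤ) = 1 + 1 by norm_num, zpow_add, zpow_one, Equiv.Perm.mul_apply,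
            this, hzero, hp]
        · exact ⟨1, by rw [zpow_one, happ, Equiv.swap_apply_of_ne_of_ne (Fin.succ_ne_zero _) hp]⟩
      exact hK ▸ (h1.trans h2)

lemma cond_decompose :
    (let σ := Equiv.Perm.decomposeFin.symm (p, τ);
    (∀ i : Fin (k + 2), n + 1 ≤ (i : ℕ) → σ i ≠ i) ∧
    ∀ i j : Fin (k + 2), n + 1 ≤ (i : ℕ) → n + 1 ≤ (j : ℕ) → i ≠ j → ¬ σ.SameCycle i j)
    ↔ Cond2 k n p τ := by
  set σ := Equiv.Perm.decomposeFin.symm (p, τ) with hσ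
  constructor
  · rintro ⟨h1, h2⟩
    constructor
    · intro x hx
      have := h1 x.succ (by simp [Fin.val_succ]; omega)
      rw [Ne, dF_fixed_iff] at this
      by_cases hτ : τ x = x
      · right
        by_contra hne
        exact this ⟨hτ, fun he => hne he.symm⟩
      · exact Or.inl hτ
    · intro x y hx hy hne hsc
      exact h2 x.succ y.succ (by simp [Fin.val_succ]; omega) (by simp [Fin.val_succ]; omega)
        (fun he => hne (Fin.succ_injective _ he)) ((dF_sameCycle_iff p τ x y).mpr hsc)
  · rintro ⟨h1, h2⟩
    constructor
    · intro i hi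
      have hi0 : i ≠ 0 := by
        intro h; rw [h] at hi; simp at hi
      obtain ⟨x, rfl⟩ := Fin.exists_succ_eq.mpr hi0
      rw [Ne, dF_fixed_iff]
      rintro ⟨hτ, hp⟩
      rcases h1 x (by simp [Fin.val_succ] at hi; omega) with h | h
      · exact h hτ
      · exact hp h.symm
    · intro i j hi hj hne hsc
      have hi0 : i ≠ 0 := by intro h; rw [h] at hi; simp at hi
      have hj0 : j ≠ 0 := by intro h; rw [h] at hj; simp at hj
      obtain ⟨x, rfl⟩ := Fin.exists_succ_eq.mpr hi0
      obtain ⟨y, rfl⟩ := Fin.exists_succ_eq.mpr hj0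
      rw [dF_sameCycle_iff] at hsc
      exact h2 x y (by simp [Fin.val_succ] at hi; omega) (by simp [Fin.val_succ] at hj; omega)
        (fun he => hne (congrArg Fin.succ he)) hsc

end decomp

end CardDist

namespace CardDist

lemma rest_transfer {k n : ℕ} (d : Fin (k + 1)) (hdn : n ≤ (d : ℕ))
    (x : {σ : Perm (Fin (k + 1)) // σ d = d}) :
    ((∀ i j : Fin (k + 1), n ≤ (i : ℕ) → n ≤ (j : ℕ) → i ≠ j → ¬ x.val.SameCycle i j)
      ∧ ∀ i : Fin (k + 1), n ≤ (i : ℕ) → i ≠ d → x.val i ≠ i) ↔ Cond k n (delAt d x) := by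
  constructor
  · rintro ⟨h2, h3⟩
    constructor
    · intro i hi hfix
      exact h3 _ ((succAbove_threshold d hdn i).mpr hi) (Fin.succAbove_ne d i)
        ((delAt_fixed_iff d x i).mp hfix)
    · intro i j hi hj hne hsc
      exact h2 _ _ ((succAbove_threshold d hdn i).mpr hi) ((succAbove_threshold d hdn j).mpr hj)
        (fun h => hne (Fin.succAbove_right_injective h)) ((delAt_sameCycle d x i j).mpr hsc)
  · rintro ⟨h1, h2⟩
    constructor
    · intro i j hi hj hne hsc
      by_cases hid : i = d
      · subst hid
        exact hne (eq_of_fixed_sameCycle x.prop hsc)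
      · by_cases hjd : j = d
        · subst hjd
          exact hne (eq_of_fixed_sameCycle x.prop hsc.symm).symm
        · obtain ⟨i', rfl⟩ := Fin.exists_succAbove_eq hid
          obtain ⟨j', rfl⟩ := Fin.exists_succAbove_eq hjd
          exact h2 i' j' ((succAbove_threshold d hdn i').mp hi)
            ((succAbove_threshold d hdn j').mp hj)
            (fun h => hne (congrArg _ h)) ((delAt_sameCycle d x i' j').mp hsc)
    · intro i hi hid hfix
      obtain ⟨i', rfl⟩ := Fin.exists_succAbove_eq hid
      exact h1 i' ((succAbove_threshold d hdn i').mp hi) ((delAt_fixed_iff d x i').mpr hfix)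

lemma perp (k n : ℕ) (p : Fin (k + 2)) :
    Nat.card {τ : Perm (Fin (k + 1)) // Cond2 k n p τ} =
      cnt (k + 1) n + if n + 1 ≤ (p : ℕ) then cnt k n else 0 := by
  classical
  rw [card_split (fun τ => Cond2 k n p τ)
    (fun τ => ∀ i : Fin (k + 1), n ≤ (i : ℕ) → τ i ≠ i)]
  congr 1
  · apply Nat.card_congr
    apply Equiv.subtypeEquivRight
    intro τ
    constructor
    · rintro ⟨⟨h1, h2⟩, hq⟩; exact ⟨hq, h2⟩
    · rintro ⟨h1, h2⟩; exact ⟨⟨fun i hi => Or.inl (h1 i hi), h2⟩, h1⟩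
  · split_ifs with hp
    · have hp0 : p ≠ 0 := by
        intro h; rw [h] at hp; simp at hp
      set d : Fin (k + 1) := p.pred hp0 with hd
      have hdsucc : d.succ = p := Fin.succ_pred p hp0
      have hdn : n ≤ (d : ℕ) := by
        rw [hd, Fin.coe_pred]; omega
      have stepA : ∀ τ : Perm (Fin (k + 1)),
          (Cond2 k n p τ ∧ ¬ ∀ i : Fin (k + 1), n ≤ (i : ℕ) → τ i ≠ i) ↔
          (τ d = d ∧ ((∀ i j : Fin (k + 1), n ≤ (i : ℕ) → n ≤ (j : ℕ) → i ≠ j →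
              ¬ τ.SameCycle i j)
            ∧ ∀ i : Fin (k + 1), n ≤ (i : ℕ) → i ≠ d → τ i ≠ i)) := by
        intro τ
        constructor
        · rintro ⟨⟨h1, h2⟩, hq⟩
          push_neg at hq
          obtain ⟨i0, hi0n, hi0⟩ := hq
          have hi0d : i0 = d := by
            rcases h1 i0 hi0n with h | h
            · exact absurd hi0 h
            · exact Fin.succ_injective _ (h.trans hdsucc.symm)
          refine ⟨hi0d ▸ hi0, h2, ?_⟩
          intro i hi hne hfix
          rcases h1 i hi with h | h
          · exact h hfix
          · exact hne (Fin.succ_injective _ (h.trans hdsucc.symm))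
        · rintro ⟨hfix, h2, h3⟩
          refine ⟨⟨?_, h2⟩, ?_⟩
          · intro i hi
            by_cases hid : i = d
            · right; rw [hid, hdsucc]
            · exact Or.inl (h3 i hi hid)
          · push_neg
            exact ⟨d, hdn, hfix⟩
      apply Nat.card_congr
      exact (Equiv.subtypeEquivRight stepA).trans
        (((Equiv.subtypeSubtypeEquivSubtypeInter _ _).symm).trans
          ((delAt d).subtypeEquiv (fun x => rest_transfer d hdn x)))
    · have : IsEmpty {τ : Perm (Fin (k + 1)) // Cond2 k n p τ ∧
          ¬ ∀ i : Fin (k + 1), n ≤ (i : ℕ) → τ i ≠ i} := by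
        refine ⟨?_⟩
        rintro ⟨τ, ⟨h1, h2⟩, hq⟩
        push_neg at hq
        obtain ⟨i0, hi0n, hi0⟩ := hq
        rcases h1 i0 hi0n with h | h
        · exact h hi0
        · have : (p : ℕ) = (i0 : ℕ) + 1 := by rw [← h, Fin.val_succ]
          omega
      exact Nat.card_of_isEmpty

end CardDist

namespace CardDist

lemma cnt_rec (k n : ℕ) :
    cnt (k + 2) (n + 1) = (k + 2) * cnt (k + 1) n + ((k + 1) - n) * cnt k n := by
  classical
  have e1 : {σ : Perm (Fin (k + 2)) // Cond (k + 2) (n + 1) σ} ≃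
      {x : Fin (k + 2) × Perm (Fin (k + 1)) // Cond2 k n x.1 x.2} := by
    refine Equiv.subtypeEquiv Equiv.Perm.decomposeFin (fun σ => ?_)
    have h := cond_decompose (n := n) (Equiv.Perm.decomposeFin σ).1 (Equiv.Perm.decomposeFin σ).2
    rw [Prod.mk.eta, Equiv.symm_apply_apply] at h
    exact h
  have e2 : {x : Fin (k + 2) × Perm (Fin (k + 1)) // Cond2 k n x.1 x.2} ≃
      Σ p : Fin (k + 2), {τ : Perm (Fin (k + 1)) // Cond2 k n p τ} :=
    Equiv.subtypeProdEquivSigmaSubtype _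
  calc cnt (k + 2) (n + 1)
      = Nat.card (Σ p : Fin (k + 2), {τ : Perm (Fin (k + 1)) // Cond2 k n p τ}) :=
        Nat.card_congr (e1.trans e2)
    _ = ∑ p : Fin (k + 2), Nat.card {τ : Perm (Fin (k + 1)) // Cond2 k n p τ} := card_sigma' _
    _ = ∑ p : Fin (k + 2), (cnt (k + 1) n + if n + 1 ≤ (p : ℕ) then cnt k n else 0) :=
        Finset.sum_congr rfl fun p _ => perp k n p
    _ = (k + 2) * cnt (k + 1) n + ((k + 1) - n) * cnt k n := by
        rw [Finset.sum_add_distrib, Finset.sum_const, Finset.card_univ, Fintype.card_fin,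
          smul_eq_mul]
        congr 1
        rw [Fin.sum_univ_eq_sum_range (fun j => if n + 1 ≤ j then cnt k n else 0) (k + 2),
          sum_range_ite]
        congr 1
        omega

lemma cnt_zero (n : ℕ) : cnt 0 n = 1 := by
  have e : {σ : Perm (Fin 0) // Cond 0 n σ} ≃ Perm (Fin 0) :=
    Equiv.subtypeUnivEquiv (fun σ => ⟨fun i => i.elim0, fun i => i.elim0⟩)
  rw [cnt, Nat.card_congr e, Nat.card_eq_fintype_card]
  simp

lemma cnt_one (n : ℕ) : cnt 1 (n + 1) = 1 := by
  have e : {σ : Perm (Fin 1) // Cond 1 (n + 1) σ} ≃ Perm (Fin 1) :=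
    Equiv.subtypeUnivEquiv (fun σ => ⟨fun i hi => absurd hi (by have := i.isLt; omega),
      fun i j hi => absurd hi (by have := i.isLt; omega)⟩)
  rw [cnt, Nat.card_congr e, Nat.card_eq_fintype_card]
  simp

lemma cnt_thresh_zero (k : ℕ) : cnt (k + 1) 0 = 0 := by
  have : IsEmpty {σ : Perm (Fin (k + 1)) // Cond (k + 1) 0 σ} := by
    refine ⟨?_⟩
    rintro ⟨σ, h1, h2⟩
    exact h2 0 (σ 0) (Nat.zero_le _) (Nat.zero_le _) (Ne.symm (h1 0 (Nat.zero_le _)))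
      ⟨1, by simp⟩
  rw [cnt]
  exact Nat.card_of_isEmpty

lemma cnt_eq : ∀ m, ∀ n, n ≤ m → cnt m n = n.factorial * n.choose (m - n) := by
  intro m
  induction m using Nat.strong_induction_on with
  | _ m ih =>
    intro n h
    rcases n with _ | n
    · rcases m with _ | m
      · rw [cnt_zero]; simp
      · rw [cnt_thresh_zero]; simp
    · rcases m with _ | _ | k
      · omega
      · have hn : n = 0 := by omega
        subst hn
        rw [cnt_one]
        simp
    
      · rw [cnt_rec, ih (k + 1) (by omega) n (by omega)]
        by_cases hnk : n ≤ k
        · rw [ih k (by omega) n hnk]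
          obtain ⟨r', rfl⟩ : ∃ r', k = n + r' := ⟨k - n, by omega⟩
          have e1 : n + r' + 1 - n = r' + 1 := by omega
          have e2 : n + r' - n = r' := by omega
          have e3 : n + r' + 2 - (n + 1) = r' + 1 := by omega
          rw [e1, e2, e3]
          have key : (n + 1) * n.choose r' = (n.choose r' + n.choose (r' + 1)) * (r' + 1) := by
            have h0 := Nat.add_one_mul_choose_eq n r'
            rwa [Nat.choose_succ_succ] at h0
          rw [Nat.factorial_succ, Nat.choose_succ_succ]
          zify
          have keyz : ((n : ℤ) + 1) * n.choose r' =
              ((n.choose r' : ℤ) + n.choose (r' + 1)) * ((r' : ℤ) + 1) := by exact_mod_cast key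
          linear_combination -(n.factorial : ℤ) * keyz
        · have hn : n = k + 1 := by omega
          subst hn
          have e0 : (k + 1) - (k + 1) = 0 := by omega
          have e1 : (k + 1 + 1) - (k + 1) = 1 := by omega
          have e2 : (k + 2) - (k + 2) = 0 := by omega
          rw [e0]
          simp [zero_mul, add_zero, e1, e2, Nat.choose_zero_right, mul_one,
            Nat.factorial_succ (k + 1)]
          try ring

end CardDist

namespace CardDist

lemma rev_sameCycle {m : ℕ} (σ : Perm (Fin m)) (x y : Fin m) :
    (Equiv.permCongr Fin.revPerm σ).SameCycle x y ↔ σ.SameCycle x.rev y.rev := by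
  have hconj : Equiv.permCongr (Fin.revPerm : Perm (Fin m)) σ =
      Fin.revPerm * σ * (Fin.revPerm : Perm (Fin m))⁻¹ := by
    ext z
    simp [Equiv.permCongr_apply, Equiv.Perm.mul_apply, Equiv.Perm.inv_def]
  rw [hconj, Equiv.Perm.sameCycle_conj]
  simp [Equiv.Perm.inv_def]

end CardDist

theorem card_distinguished_nonfixed_distinct_cycles (r n : ℕ) (hr : 1 ≤ r) (hn : r ≤ n) :
    Nat.card {σ : Equiv.Perm (Fin (n + r)) //
        (∀ i : Fin (n + r), (i : ℕ) < r → σ i ≠ i) ∧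
        ∀ i j : Fin (n + r), (i : ℕ) < r → (j : ℕ) < r → i ≠ j → ¬ σ.SameCycle i j} =
      n.factorial / r.factorial * n.descFactorial r := by
  classical
  have hval : ∀ i : Fin (n + r), ((i.rev : Fin (n + r)) : ℕ) = n + r - 1 - (i : ℕ) := fun i => by
    rw [Fin.val_rev]; omega
  have e : {σ : Equiv.Perm (Fin (n + r)) //
        (∀ i : Fin (n + r), (i : ℕ) < r → σ i ≠ i) ∧
        ∀ i j : Fin (n + r), (i : ℕ) < r → (j : ℕ) < r → i ≠ j → ¬ σ.SameCycle i j} ≃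
      {σ : Equiv.Perm (Fin (n + r)) // CardDist.Cond (n + r) n σ} := by
    refine Equiv.subtypeEquiv (Equiv.permCongr Fin.revPerm) (fun σ => ?_)
    have happ : ∀ x : Fin (n + r), (Equiv.permCongr Fin.revPerm σ) x = (σ x.rev).rev :=
      fun x => by simp [Equiv.permCongr_apply, Equiv.Perm.inv_def]
    constructor
    · rintro ⟨h1, h2⟩
      constructor
      · intro i hi hfix
        rw [happ] at hfix
        have hfix' : σ i.rev = i.rev := by
          have := congrArg Fin.rev hfix
          rwa [Fin.rev_rev] at this
        exact h1 i.rev (by rw [hval]; have := i.isLt; omega) hfix'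
      · intro i j hi hj hne hsc
        rw [CardDist.rev_sameCycle] at hsc
        exact h2 i.rev j.rev (by rw [hval]; have := i.isLt; omega)
          (by rw [hval]; have := j.isLt; omega)
          (fun hh => hne (by rw [← Fin.rev_rev i, hh, Fin.rev_rev])) hsc
    · rintro ⟨h1, h2⟩
      constructor
      · intro i hi hfix
        refine h1 i.rev (by rw [hval]; have := i.isLt; omega) ?_
        rw [happ, Fin.rev_rev, hfix]
      · intro i j hi hj hne hsc
        refine h2 i.rev j.rev (by rw [hval]; have := i.isLt; omega)
          (by rw [hval]; have := j.isLt; omega)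
          (fun hh => hne (by rw [← Fin.rev_rev i, hh, Fin.rev_rev])) ?_
        rw [CardDist.rev_sameCycle, Fin.rev_rev, Fin.rev_rev]
        exact hsc
  rw [Nat.card_congr e]
  have hcnt := CardDist.cnt_eq (n + r) n (by omega)
  rw [Nat.add_sub_cancel_left] at hcnt
  show CardDist.cnt (n + r) n = _
  rw [hcnt, Nat.descFactorial_eq_factorial_mul_choose, ← mul_assoc,
    Nat.div_mul_cancel (Nat.factorial_dvd_factorial hn)]
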